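/- Let G = (I_k | M) be a systematic generator matrix of a [2k, k, k]_q code with q ∈ {2,3}. Then there do not exist two distinct row indices i, j and three distinct columns of M whose entries agree in rows i and j simultaneously. -/

import Mathlib

lemma hammingNorm_sumElim {α : Type*} {m n : Type*} [Fintype m] [Fintype n]
    [Zero α] [DecidableEq α] (f : m → α) (g : n → α) :
    hammingNorm (Sum.elim f g) = hammingNorm f + hammingNorm g := by
  classical
  simp only [hammingNorm, Finset.card_filter]
  rw [Fintype.sum_sum_type]
  simp
  congr 1 <;> exact Finset.sum_congr rfl fun x _ => by split_ifs <;> simp_all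

theorem systematic_no_three_agreeing_columns (q : ℕ) (hq : q = 2 ∨ q = 3) (k : ℕ)
    (M : Matrix (Fin k) (Fin k) (ZMod q))
    (G : Matrix (Fin k) (Fin k ⊕ Fin k) (ZMod q))
    (hG : G = Matrix.fromCols 1 M)
    (hdist : ∀ u : Fin k → ZMod q, u ≠ 0 → k ≤ hammingNorm (Matrix.vecMul u G))
    (hmin : ∃ u : Fin k → ZMod q, u ≠ 0 ∧ hammingNorm (Matrix.vecMul u G) = k) :
    ∀ i j : Fin k, i ≠ j → ∀ c1 c2 c3 : Fin k, c1 ≠ c2 → c1 ≠ c3 → c2 ≠ c3 →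
      ¬(M i c1 = M i c2 ∧ M j c1 = M j c2 ∧ M i c2 = M i c3 ∧ M j c2 = M j c3) := by
  classical
  intro i j hij c1 c2 c3 h12 h13 h23 ⟨e1, e2, e3, e4⟩
  have hq1 : (1 : ZMod q) ≠ 0 := by
    rcases hq with rfl | rfl <;> decide
  set x := M i c1 with hx
  set y := M j c1 with hy
  -- choose (a,b) ≠ 0 with a*x + b*y = 0
  obtain ⟨a, b, hab, habxy⟩ : ∃ a b : ZMod q, ¬(a = 0 ∧ b = 0) ∧ a * x + b * y = 0 := by
    by_cases hx0 : x = 0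
    · by_cases hy0 : y = 0
      · exact ⟨1, 0, by simp [hq1], by simp [hx0, hy0]⟩
      · exact ⟨1, 0, by simp [hq1], by simp [hx0]⟩
    · exact ⟨y, -x, by simp [hx0], by ring⟩
  set u : Fin k → ZMod q := fun t => if t = i then a else if t = j then b else 0 with hu
  have hu0 : u ≠ 0 := by
    intro h
    apply hab
    have hi := congrFun h i
    have hj := congrFun h j
    simp only [hu, if_pos rfl, Pi.zero_apply] at hi
    simp only [hu, if_neg (Ne.symm hij), if_pos rfl, Pi.zero_apply] at hj
    exact ⟨hi, hj⟩
  have key : hammingNorm (Matrix.vecMul u G) < k := by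
    rw [hG, Matrix.vecMul_fromCols, Matrix.vecMul_one, hammingNorm_sumElim]
    have hL : hammingNorm u ≤ 2 := by
      have : (Finset.univ.filter fun t => u t ≠ 0) ⊆ {i, j} := by
        intro t ht
        simp only [Finset.mem_filter, Finset.mem_univ, true_and] at ht
        by_contra hmem
        simp only [Finset.mem_insert, Finset.mem_singleton, not_or] at hmem
        simp [hu, hmem.1, hmem.2] at ht
      calc hammingNorm u ≤ ({i, j} : Finset (Fin k)).card := Finset.card_le_card this
        _ ≤ 2 := Finset.card_insert_le _ _ |>.trans (by simp)
    have hw : ∀ c : Fin k, (Matrix.vecMul u M) c = a * M i c + b * M j c := by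
      intro c
      rw [Matrix.vecMul, dotProduct]
      rw [Finset.sum_eq_add_of_mem i j (Finset.mem_univ _) (Finset.mem_univ _) hij
        (by intro t _ ht; simp [hu, ht.1, ht.2])]
      simp [hu, hij, hij.symm]
    have hz : ∀ c ∈ ({c1, c2, c3} : Finset (Fin k)), (Matrix.vecMul u M) c = 0 := by
      intro c hc
      rw [hw]
      simp only [Finset.mem_insert, Finset.mem_singleton] at hc
      rcases hc with rfl | rfl | rfl
      · exact habxy
      · rw [← e1, ← e2]; exact habxy
      · rw [← e3, ← e1, ← e4, ← e2]; exact habxy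
    have hR : hammingNorm (Matrix.vecMul u M) ≤ k - 3 := by
      have hsub : (Finset.univ.filter fun c => Matrix.vecMul u M c ≠ 0)
          ⊆ ({c1, c2, c3} : Finset (Fin k))ᶜ := by
        intro c hc
        simp only [Finset.mem_filter, Finset.mem_univ, true_and] at hc
        simp only [Finset.mem_compl]
        intro hmem
        exact hc (hz c hmem)
      have hcard : ({c1, c2, c3} : Finset (Fin k)).card = 3 := by
        rw [Finset.card_insert_of_notMem (by simp [h12, h13]),
          Finset.card_insert_of_notMem (by simp [h23]), Finset.card_singleton]
      calc hammingNorm (Matrix.vecMul u M) ≤ _ := Finset.card_le_card hsub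
        _ = k - 3 := by rw [Finset.card_compl, hcard, Fintype.card_fin]
    have hk3 : 3 ≤ k := by
      have : ({c1, c2, c3} : Finset (Fin k)).card ≤ Fintype.card (Fin k) :=
        Finset.card_le_univ _
      rw [Finset.card_insert_of_notMem (by simp [h12, h13]),
        Finset.card_insert_of_notMem (by simp [h23]), Finset.card_singleton,
        Fintype.card_fin] at this
      exact this
    omega
  exact absurd (hdist u hu0) (not_le.mpr key)
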